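/- Under the coupled-dynamics setup, let R > 0 satisfy R ≤ (4/27)(1 − ‖A'_{t₀}‖)/(‖H‖³ b_max²) − α. Then for every Δt ∈ ℕ with 0 ≤ Δt ≤ R/α, the approximation error of the exact matrix trajectory by the approximate one is quadratic in time: ‖A_{t₀+Δt} − A'_{t₀+Δt}‖ ≤ ‖H‖³ b_max² · (α² Δt² / (2R)) · (2 + α Δt / (2R)). -/

import Mathlib

open Matrix Finset

/-- The spectral norm (ℓ²-operator norm) of a real square matrix. -/
noncomputable def specNorm {n : ℕ} (A : Matrix (Fin n) (Fin n) ℝ) : ℝ :=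
  ‖Matrix.toEuclideanCLM (𝕜 := ℝ) A‖

/-- The Euclidean norm of a real vector. -/
noncomputable def evNorm {n : ℕ} (v : Fin n → ℝ) : ℝ :=
  Real.sqrt (∑ i, v i ^ 2)

/-- `ε_A(Δt) = max_{t₀ ≤ τ ≤ t₀+Δt} ‖A_τ − A'_{t₀}‖` (spectral norm). -/
noncomputable def epsA {n : ℕ} (t₀ : ℕ)
    (A A' : ℕ → Matrix (Fin n) (Fin n) ℝ) (Δt : ℕ) : ℝ :=
  (Finset.Icc t₀ (t₀ + Δt)).sup'
    (Finset.nonempty_Icc.mpr (Nat.le_add_right _ _))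
    (fun τ => specNorm (A τ - A' t₀))

/-- `ε_b(Δt) = max_{t₀ ≤ τ ≤ t₀+Δt} ‖b_τ − b'_τ‖` (Euclidean norm). -/
noncomputable def epsB {n : ℕ} (t₀ : ℕ)
    (b b' : ℕ → (Fin n → ℝ)) (Δt : ℕ) : ℝ :=
  (Finset.Icc t₀ (t₀ + Δt)).sup'
    (Finset.nonempty_Icc.mpr (Nat.le_add_right _ _))
    (fun τ => evNorm (b τ - b' τ))

section auxlemmas
variable {n : ℕ}

lemma evNorm_eq (v : Fin n → ℝ) :
    evNorm v = ‖(WithLp.equiv 2 (Fin n → ℝ)).symm v‖ := by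
  rw [EuclideanSpace.norm_eq]
  simp [evNorm, Real.norm_eq_abs, sq_abs]

lemma evNorm_nonneg (v : Fin n → ℝ) : 0 ≤ evNorm v := by
  rw [evNorm_eq]; exact norm_nonneg _

lemma evNorm_zero : evNorm (0 : Fin n → ℝ) = 0 := by
  rw [show (0 : Fin n → ℝ) = (WithLp.equiv 2 (Fin n → ℝ)) 0 from rfl, evNorm_eq]
  simp

lemma evNorm_add_le (u v : Fin n → ℝ) : evNorm (u + v) ≤ evNorm u + evNorm v := by
  rw [evNorm_eq, evNorm_eq, evNorm_eq]
  exact norm_add_le ((WithLp.equiv 2 (Fin n → ℝ)).symm u) ((WithLp.equiv 2 (Fin n → ℝ)).symm v)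

lemma specNorm_nonneg (A : Matrix (Fin n) (Fin n) ℝ) : 0 ≤ specNorm A := norm_nonneg _

lemma specNorm_zero : specNorm (0 : Matrix (Fin n) (Fin n) ℝ) = 0 := by
  unfold specNorm; rw [map_zero, norm_zero]

lemma specNorm_add_le (X Y : Matrix (Fin n) (Fin n) ℝ) :
    specNorm (X + Y) ≤ specNorm X + specNorm Y := by
  unfold specNorm; rw [map_add]; exact norm_add_le _ _

lemma specNorm_neg (X : Matrix (Fin n) (Fin n) ℝ) : specNorm (-X) = specNorm X := by
  unfold specNorm; rw [map_neg, norm_neg]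

lemma specNorm_sub_le (X Y : Matrix (Fin n) (Fin n) ℝ) :
    specNorm (X - Y) ≤ specNorm X + specNorm Y := by
  rw [sub_eq_add_neg]
  exact (specNorm_add_le _ _).trans (by rw [specNorm_neg])

lemma specNorm_mul_le (X Y : Matrix (Fin n) (Fin n) ℝ) :
    specNorm (X * Y) ≤ specNorm X * specNorm Y := by
  unfold specNorm; rw [_root_.map_mul]; exact norm_mul_le _ _

set_option synthInstance.maxHeartbeats 1000000 in
lemma specNorm_smul (r : ℝ) (X : Matrix (Fin n) (Fin n) ℝ) :
    specNorm (r • X) = |r| * specNorm X := by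
  unfold specNorm
  rw [_root_.map_smul, norm_smul r (Matrix.toEuclideanCLM (𝕜 := ℝ) X), Real.norm_eq_abs]

lemma Matrix.toEuclideanCLM_piLp_equiv_symm {𝕜 : Type*} [RCLike 𝕜]
    (A : Matrix (Fin n) (Fin n) 𝕜) (v : Fin n → 𝕜) :
    Matrix.toEuclideanCLM (𝕜 := 𝕜) A ((WithLp.equiv 2 (Fin n → 𝕜)).symm v)
      = (WithLp.equiv 2 (Fin n → 𝕜)).symm (Matrix.toLin' A v) := rfl

lemma evNorm_mulVec_le (A : Matrix (Fin n) (Fin n) ℝ) (v : Fin n → ℝ) :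
    evNorm (A *ᵥ v) ≤ specNorm A * evNorm v := by
  rw [evNorm_eq, evNorm_eq]
  have := Matrix.toEuclideanCLM_piLp_equiv_symm (𝕜 := ℝ) A v
  rw [Matrix.toLin'_apply] at this
  rw [← this]
  exact ContinuousLinearMap.le_opNorm _ _

lemma specNorm_vecMulVec_le (u v : Fin n → ℝ) :
    specNorm (vecMulVec u v) ≤ evNorm u * evNorm v := by
  unfold specNorm
  refine ContinuousLinearMap.opNorm_le_bound _ (mul_nonneg (evNorm_nonneg u) (evNorm_nonneg v)) ?_
  intro x
  have hx : x = (WithLp.equiv 2 (Fin n → ℝ)).symm ((WithLp.equiv 2 (Fin n → ℝ)) x) := rfl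
  rw [hx, Matrix.toEuclideanCLM_piLp_equiv_symm, Matrix.toLin'_apply]
  have hmv : vecMulVec u v *ᵥ ((WithLp.equiv 2 (Fin n → ℝ)) x)
      = (v ⬝ᵥ ((WithLp.equiv 2 (Fin n → ℝ)) x)) • u := by
    ext i
    simp [Matrix.mulVec, Matrix.vecMulVec, dotProduct, Finset.mul_sum, mul_comm,
      mul_assoc, mul_left_comm]
  rw [hmv, ← evNorm_eq]
  have hsmul : evNorm ((v ⬝ᵥ ((WithLp.equiv 2 (Fin n → ℝ)) x)) • u)
      = |v ⬝ᵥ ((WithLp.equiv 2 (Fin n → ℝ)) x)| * evNorm u := by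
    rw [evNorm_eq, evNorm_eq]
    rw [show ((WithLp.equiv 2 (Fin n → ℝ)).symm ((v ⬝ᵥ ((WithLp.equiv 2 (Fin n → ℝ)) x)) • u))
        = (v ⬝ᵥ ((WithLp.equiv 2 (Fin n → ℝ)) x)) • (WithLp.equiv 2 (Fin n → ℝ)).symm u from rfl]
    rw [norm_smul, Real.norm_eq_abs]
  rw [hsmul]
  have hcs : |v ⬝ᵥ ((WithLp.equiv 2 (Fin n → ℝ)) x)| ≤ evNorm v * ‖x‖ := by
    have : v ⬝ᵥ ((WithLp.equiv 2 (Fin n → ℝ)) x)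
        = inner ℝ ((WithLp.equiv 2 (Fin n → ℝ)).symm v) x := by
      rw [PiLp.inner_apply]
      simp [dotProduct, RCLike.inner_apply, mul_comm]
    rw [this, evNorm_eq]
    exact abs_real_inner_le_norm _ _
  calc |v ⬝ᵥ ((WithLp.equiv 2 (Fin n → ℝ)) x)| * evNorm u
      ≤ (evNorm v * ‖x‖) * evNorm u := mul_le_mul_of_nonneg_right hcs (evNorm_nonneg u)
    _ = evNorm u * evNorm v * ‖x‖ := by ring

end auxlemmas


set_option maxHeartbeats 2000000 in
/-- Quadratic-in-time bound on the approximation error of the matrix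
trajectory. -/
theorem lodo_matrix_trajectory_error_bound
    (n : ℕ) (hn : 1 ≤ n) (t₀ : ℕ) (α : ℝ) (hα : 0 < α)
    (H : Matrix (Fin n) (Fin n) ℝ) (s : ℕ → (Fin n → ℝ))
    (bmax : ℝ) (hbmax : 0 < bmax)
    (A A' : ℕ → Matrix (Fin n) (Fin n) ℝ) (b b' : ℕ → (Fin n → ℝ))
    (hb0 : b t₀ = 0)
    (hbrec : ∀ t, t₀ ≤ t → b (t + 1) = A t *ᵥ b t - s t)
    (hArec : ∀ t, t₀ ≤ t →
      A (t + 1) = A t - α • (H * vecMulVec (b (t + 1)) (b t) * H ^ 2))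
    (hA'0 : A' t₀ = A t₀) (hb'0 : b' t₀ = 0)
    (hb'rec : ∀ t, t₀ ≤ t → b' (t + 1) = A' t₀ *ᵥ b' t - s t)
    (hA'rec : ∀ t, t₀ ≤ t →
      A' (t + 1) = A' t - α • (H * vecMulVec (b' (t + 1)) (b' t) * H ^ 2))
    (hAnorm : specNorm (A' t₀) < 1)
    (hb'bound : ∀ t, t₀ ≤ t → evNorm (b' t) ≤ bmax) :
    ∀ R : ℝ, 0 < R →
      R ≤ 4 / 27 * (1 - specNorm (A' t₀)) / (specNorm H ^ 3 * bmax ^ 2) - α →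
      ∀ Δt : ℕ, (Δt : ℝ) ≤ R / α →
        specNorm (A (t₀ + Δt) - A' (t₀ + Δt)) ≤
          specNorm H ^ 3 * bmax ^ 2 * (α ^ 2 * Δt ^ 2 / (2 * R)) *
            (2 + α * Δt / (2 * R)) := by
  intro R hR hRle Δt hΔt
  set a := specNorm (A' t₀) with ha_def
  set h := specNorm H with hh_def
  have ha0 : 0 ≤ a := specNorm_nonneg _
  have h1a : 0 < 1 - a := by linarith
  have hhn : 0 ≤ h := specNorm_nonneg _
  set C := h ^ 3 * bmax ^ 2 with hC_def
  clear_value a h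
  have hC0 : 0 ≤ C := by
    rw [hC_def]; exact mul_nonneg (pow_nonneg hhn 3) (sq_nonneg bmax)
  clear_value C
  have hC : 0 < C := by
    rcases hC0.lt_or_eq with h' | h'
    · exact h'
    · exfalso
      rw [← h', div_zero] at hRle
      linarith
  have hCRα : C * (R + α) ≤ 4 / 27 * (1 - a) := by
    have h2 : R + α ≤ 4 / 27 * (1 - a) / C := by linarith
    have h3 := (le_div_iff₀ hC).mp h2
    linarith [h3, mul_comm C (R + α)]
  have hCR : C * R ≤ 4 / 27 * (1 - a) := by nlinarith
  set c := 27 / 8 * C * bmax / (1 - a) with hc_def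
  have hc0 : 0 < c := by
    rw [hc_def]; exact div_pos (by nlinarith) h1a
  clear_value c
  have hc1a : c * (1 - a) = 27 / 8 * C * bmax := by
    rw [hc_def]; field_simp
  have hcR : c * R ≤ bmax / 2 := by
    rw [hc_def, div_mul_eq_mul_div, div_le_iff₀ h1a]
    nlinarith [mul_le_mul_of_nonneg_left hCR (show (0:ℝ) ≤ 27 / 8 * bmax by positivity)]
  -- bound on triple products
  have hH3 : ∀ (u v : Fin n → ℝ),
      specNorm (H * vecMulVec u v * H ^ 2) ≤ h ^ 3 * (evNorm u * evNorm v) := by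
    intro u v
    rw [hh_def]
    have h2 : specNorm (H ^ 2) ≤ specNorm H ^ 2 := by
      rw [pow_two, pow_two]
      exact specNorm_mul_le H H
    calc specNorm (H * vecMulVec u v * H ^ 2)
        ≤ specNorm (H * vecMulVec u v) * specNorm (H ^ 2) := specNorm_mul_le _ _
      _ ≤ (specNorm H * (evNorm u * evNorm v)) * specNorm H ^ 2 := by
          apply mul_le_mul _ h2 (specNorm_nonneg _)
            (mul_nonneg (specNorm_nonneg H) (mul_nonneg (evNorm_nonneg _) (evNorm_nonneg _)))
          calc specNorm (H * vecMulVec u v)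
              ≤ specNorm H * specNorm (vecMulVec u v) := specNorm_mul_le _ _
            _ ≤ specNorm H * (evNorm u * evNorm v) :=
                mul_le_mul_of_nonneg_left (specNorm_vecMulVec_le u v) (specNorm_nonneg H)
      _ = specNorm H ^ 3 * (evNorm u * evNorm v) := by ring
  -- main joint induction
  have key : ∀ k : ℕ, α * k ≤ R →
      specNorm (A (t₀ + k) - A' t₀) ≤ 9 / 4 * C * α * k ∧
      evNorm (b (t₀ + k) - b' (t₀ + k)) ≤ c * α * k := by
    intro k
    induction k with
    | zero =>
      intro _
      constructor
      · rw [show t₀ + 0 = t₀ from rfl, hA'0, sub_self, specNorm_zero]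
        positivity
      · rw [show t₀ + 0 = t₀ from rfl, hb0, hb'0, sub_self, evNorm_zero]
        positivity
    | succ k ih =>
      intro hk1
      push_cast at hk1
      have hk : α * k ≤ R := by nlinarith
      obtain ⟨ihA, ihb⟩ := ih hk
      have ht : t₀ ≤ t₀ + k := Nat.le_add_right _ _
      have hcαk : c * α * (k : ℝ) ≤ bmax / 2 := by
        calc c * α * (k : ℝ) = c * (α * k) := by ring
          _ ≤ c * R := mul_le_mul_of_nonneg_left hk hc0.le
          _ ≤ bmax / 2 := hcR
      have hebk : evNorm (b (t₀ + k) - b' (t₀ + k)) ≤ bmax / 2 := ihb.trans hcαk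
      have heAk : specNorm (A (t₀ + k) - A' t₀) ≤ (1 - a) / 3 := by
        refine ihA.trans ?_
        nlinarith [mul_le_mul_of_nonneg_left hk hC.le]
      have hbknorm : evNorm (b (t₀ + k)) ≤ 3 / 2 * bmax := by
        have e : b (t₀ + k) = (b (t₀ + k) - b' (t₀ + k)) + b' (t₀ + k) := by abel
        rw [e]
        have := (evNorm_add_le (b (t₀ + k) - b' (t₀ + k)) (b' (t₀ + k)))
        have := hb'bound _ ht
        linarith
      have hAnormk : specNorm (A (t₀ + k)) ≤ a + (1 - a) / 3 := by
        have e : A (t₀ + k) = (A (t₀ + k) - A' t₀) + A' t₀ := by abel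
        rw [e]
        have := specNorm_add_le (A (t₀ + k) - A' t₀) (A' t₀)
        linarith
      have hbstep : b (t₀ + (k + 1)) - b' (t₀ + (k + 1))
          = A (t₀ + k) *ᵥ (b (t₀ + k) - b' (t₀ + k)) + (A (t₀ + k) - A' t₀) *ᵥ b' (t₀ + k) := by
        rw [show t₀ + (k + 1) = (t₀ + k) + 1 from rfl, hbrec _ ht, hb'rec _ ht,
          Matrix.mulVec_sub, Matrix.sub_mulVec]
        abel
      have hbsucc : evNorm (b (t₀ + (k + 1)) - b' (t₀ + (k + 1))) ≤ c * α * k := by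
        rw [hbstep]
        calc evNorm (A (t₀ + k) *ᵥ (b (t₀ + k) - b' (t₀ + k)) + (A (t₀ + k) - A' t₀) *ᵥ b' (t₀ + k))
            ≤ evNorm (A (t₀ + k) *ᵥ (b (t₀ + k) - b' (t₀ + k)))
              + evNorm ((A (t₀ + k) - A' t₀) *ᵥ b' (t₀ + k)) := evNorm_add_le _ _
          _ ≤ specNorm (A (t₀ + k)) * evNorm (b (t₀ + k) - b' (t₀ + k))
              + specNorm (A (t₀ + k) - A' t₀) * evNorm (b' (t₀ + k)) :=
                add_le_add (evNorm_mulVec_le _ _) (evNorm_mulVec_le _ _)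
          _ ≤ (a + (1 - a) / 3) * (c * α * k) + (9 / 4 * C * α * k) * bmax := by
              apply add_le_add
              · exact mul_le_mul hAnormk ihb (evNorm_nonneg _) (by linarith)
              · exact mul_le_mul ihA (hb'bound _ ht) (evNorm_nonneg _) (by positivity)
          _ ≤ c * α * k := by nlinarith [mul_nonneg hα.le (Nat.cast_nonneg k), hc1a]
      have hbsucc' : evNorm (b (t₀ + (k + 1)) - b' (t₀ + (k + 1))) ≤ c * α * ((k : ℝ) + 1) := by
        refine hbsucc.trans ?_
        nlinarith [hc0.le, hα.le]
      have hbnorm1 : evNorm (b (t₀ + (k + 1))) ≤ 3 / 2 * bmax := by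
        have e : b (t₀ + (k + 1)) = (b (t₀ + (k + 1)) - b' (t₀ + (k + 1))) + b' (t₀ + (k + 1)) := by
          abel
        rw [e]
        have h1 := evNorm_add_le (b (t₀ + (k + 1)) - b' (t₀ + (k + 1))) (b' (t₀ + (k + 1)))
        have h2 := hb'bound (t₀ + (k + 1)) (Nat.le_add_right _ _)
        have h3 : evNorm (b (t₀ + (k + 1)) - b' (t₀ + (k + 1))) ≤ bmax / 2 :=
          hbsucc.trans hcαk
        linarith
      have hAsucc : specNorm (A (t₀ + (k + 1)) - A' t₀) ≤ 9 / 4 * C * α * ((k : ℝ) + 1) := by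
        rw [show t₀ + (k + 1) = (t₀ + k) + 1 from rfl, hArec _ ht, sub_right_comm]
        calc specNorm ((A (t₀ + k) - A' t₀)
              - α • (H * vecMulVec (b (t₀ + k + 1)) (b (t₀ + k)) * H ^ 2))
            ≤ specNorm (A (t₀ + k) - A' t₀)
              + specNorm (α • (H * vecMulVec (b (t₀ + k + 1)) (b (t₀ + k)) * H ^ 2)) :=
              specNorm_sub_le _ _
          _ ≤ 9 / 4 * C * α * k
              + α * (h ^ 3 * (evNorm (b (t₀ + k + 1)) * evNorm (b (t₀ + k)))) := by
              apply add_le_add ihA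
              rw [specNorm_smul, abs_of_pos hα]
              exact mul_le_mul_of_nonneg_left (hH3 _ _) hα.le
          _ ≤ 9 / 4 * C * α * k + α * (h ^ 3 * ((3 / 2 * bmax) * (3 / 2 * bmax))) := by
              have hprod : evNorm (b (t₀ + k + 1)) * evNorm (b (t₀ + k))
                  ≤ (3 / 2 * bmax) * (3 / 2 * bmax) :=
                mul_le_mul hbnorm1 hbknorm (evNorm_nonneg _) (by positivity)
              exact add_le_add_right (mul_le_mul_of_nonneg_left
                (mul_le_mul_of_nonneg_left hprod (pow_nonneg hhn 3)) hα.le) _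
          _ = 9 / 4 * C * α * ((k : ℝ) + 1) := by rw [hC_def]; ring
      constructor
      · push_cast
        exact hAsucc
      · push_cast
        exact hbsucc'
  -- second induction : distance between A and A'
  have key2 : ∀ k : ℕ, α * k ≤ R →
      specNorm (A (t₀ + k) - A' (t₀ + k))
        ≤ h ^ 3 * bmax * c * α ^ 2 * (5 / 4 * (k : ℝ) ^ 2 + 1 / 4 * k) := by
    intro k
    induction k with
    | zero =>
      intro _
      rw [show t₀ + 0 = t₀ from rfl, hA'0, sub_self, specNorm_zero]
      push_cast
      norm_num
    | succ k ih =>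
      intro hk1
      have hk1' := hk1
      push_cast at hk1'
      have hk : α * k ≤ R := by nlinarith
      have hd := ih hk
      obtain ⟨_, ebk⟩ := key k hk
      obtain ⟨_, ebk1⟩ := key (k + 1) hk1
      push_cast at ebk1
      have ht : t₀ ≤ t₀ + k := Nat.le_add_right _ _
      have hcαk : c * α * (k : ℝ) ≤ bmax / 2 := by
        calc c * α * (k : ℝ) = c * (α * k) := by ring
          _ ≤ c * R := mul_le_mul_of_nonneg_left hk hc0.le
          _ ≤ bmax / 2 := hcR
      have hbknorm : evNorm (b (t₀ + k)) ≤ 3 / 2 * bmax := by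
        have e : b (t₀ + k) = (b (t₀ + k) - b' (t₀ + k)) + b' (t₀ + k) := by abel
        rw [e]
        have h1 := evNorm_add_le (b (t₀ + k) - b' (t₀ + k)) (b' (t₀ + k))
        have h2 := hb'bound _ ht
        have h3 : evNorm (b (t₀ + k) - b' (t₀ + k)) ≤ bmax / 2 := ebk.trans hcαk
        linarith
      have hv2 : vecMulVec (b (t₀ + k + 1)) (b (t₀ + k))
          = vecMulVec (b' (t₀ + k + 1)) (b' (t₀ + k))
            + vecMulVec (b (t₀ + k + 1) - b' (t₀ + k + 1)) (b (t₀ + k))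
            + vecMulVec (b' (t₀ + k + 1)) (b (t₀ + k) - b' (t₀ + k)) := by
        ext i j
        simp [Matrix.vecMulVec_apply]
        ring
      have dstep : A (t₀ + (k + 1)) - A' (t₀ + (k + 1))
          = (A (t₀ + k) - A' (t₀ + k))
            - α • (H * vecMulVec (b (t₀ + k + 1) - b' (t₀ + k + 1)) (b (t₀ + k)) * H ^ 2)
            - α • (H * vecMulVec (b' (t₀ + k + 1)) (b (t₀ + k) - b' (t₀ + k)) * H ^ 2) := by
        rw [show t₀ + (k + 1) = (t₀ + k) + 1 from rfl, hArec _ ht, hA'rec _ ht, hv2]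
        simp only [Matrix.mul_add, Matrix.add_mul, smul_add]
        abel
      rw [dstep]
      have n1 : specNorm (α • (H * vecMulVec (b (t₀ + k + 1) - b' (t₀ + k + 1)) (b (t₀ + k)) * H ^ 2))
          ≤ α * (h ^ 3 * ((c * α * ((k : ℝ) + 1)) * (3 / 2 * bmax))) := by
        rw [specNorm_smul, abs_of_pos hα]
        apply mul_le_mul_of_nonneg_left _ hα.le
        refine (hH3 _ _).trans ?_
        apply mul_le_mul_of_nonneg_left _ (by positivity)
        exact mul_le_mul ebk1 hbknorm (evNorm_nonneg _)
          (by positivity)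
      have n2 : specNorm (α • (H * vecMulVec (b' (t₀ + k + 1)) (b (t₀ + k) - b' (t₀ + k)) * H ^ 2))
          ≤ α * (h ^ 3 * (bmax * (c * α * (k : ℝ)))) := by
        rw [specNorm_smul, abs_of_pos hα]
        apply mul_le_mul_of_nonneg_left _ hα.le
        refine (hH3 _ _).trans ?_
        apply mul_le_mul_of_nonneg_left _ (by positivity)
        exact mul_le_mul (hb'bound _ (by omega)) ebk (evNorm_nonneg _)
          (by positivity)
      calc specNorm ((A (t₀ + k) - A' (t₀ + k))
            - α • (H * vecMulVec (b (t₀ + k + 1) - b' (t₀ + k + 1)) (b (t₀ + k)) * H ^ 2)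
            - α • (H * vecMulVec (b' (t₀ + k + 1)) (b (t₀ + k) - b' (t₀ + k)) * H ^ 2))
          ≤ specNorm ((A (t₀ + k) - A' (t₀ + k))
            - α • (H * vecMulVec (b (t₀ + k + 1) - b' (t₀ + k + 1)) (b (t₀ + k)) * H ^ 2))
            + specNorm (α • (H * vecMulVec (b' (t₀ + k + 1)) (b (t₀ + k) - b' (t₀ + k)) * H ^ 2)) :=
            specNorm_sub_le _ _
        _ ≤ (specNorm (A (t₀ + k) - A' (t₀ + k))
            + specNorm (α • (H * vecMulVec (b (t₀ + k + 1) - b' (t₀ + k + 1)) (b (t₀ + k)) * H ^ 2)))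
            + specNorm (α • (H * vecMulVec (b' (t₀ + k + 1)) (b (t₀ + k) - b' (t₀ + k)) * H ^ 2)) :=
            add_le_add_left (specNorm_sub_le _ _) _
        _ ≤ (h ^ 3 * bmax * c * α ^ 2 * (5 / 4 * (k : ℝ) ^ 2 + 1 / 4 * k)
            + α * (h ^ 3 * ((c * α * ((k : ℝ) + 1)) * (3 / 2 * bmax))))
            + α * (h ^ 3 * (bmax * (c * α * (k : ℝ)))) := by
            exact add_le_add (add_le_add hd n1) n2
        _ = h ^ 3 * bmax * c * α ^ 2 * (5 / 4 * ((k : ℝ) + 1) ^ 2 + 1 / 4 * ((k : ℝ) + 1)) := by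
            ring
        _ = h ^ 3 * bmax * c * α ^ 2 * (5 / 4 * ((k + 1 : ℕ) : ℝ) ^ 2 + 1 / 4 * ((k + 1 : ℕ) : ℝ)) := by
            push_cast; ring
  -- conclusion
  have hαΔt : α * Δt ≤ R := by
    rw [le_div_iff₀ hα] at hΔt
    linarith [mul_comm α (Δt : ℝ)]
  have hfinal := key2 Δt hαΔt
  have hKR : h ^ 3 * bmax * c * R ≤ C / 2 := by
    have e1 : h ^ 3 * bmax * c * R * (1 - a) = h ^ 3 * bmax * R * (c * (1 - a)) := by ring
    rw [hc1a] at e1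
    have e2 : h ^ 3 * bmax * R * (27 / 8 * C * bmax) = 27 / 8 * C * (C * R) := by
      rw [hC_def]; ring
    have e3 : 27 / 8 * C * (C * R) ≤ 27 / 8 * C * (4 / 27 * (1 - a)) :=
      mul_le_mul_of_nonneg_left hCR (by positivity)
    nlinarith [h1a]
  have hΔ2 : (Δt : ℝ) ≤ (Δt : ℝ) ^ 2 := by
    have := Nat.le_self_pow two_ne_zero Δt
    exact_mod_cast this
  have hX : h ^ 3 * bmax * c * α ^ 2 * (5 / 4 * (Δt : ℝ) ^ 2 + 1 / 4 * Δt)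
      ≤ C * α ^ 2 * (Δt : ℝ) ^ 2 / R := by
    rw [le_div_iff₀ hR]
    have p1 : 5 / 4 * (Δt : ℝ) ^ 2 + 1 / 4 * Δt ≤ 3 / 2 * (Δt : ℝ) ^ 2 := by nlinarith
    calc h ^ 3 * bmax * c * α ^ 2 * (5 / 4 * (Δt : ℝ) ^ 2 + 1 / 4 * Δt) * R
        = (h ^ 3 * bmax * c * R) * (α ^ 2 * (5 / 4 * (Δt : ℝ) ^ 2 + 1 / 4 * Δt)) := by ring
      _ ≤ (C / 2) * (α ^ 2 * (3 / 2 * (Δt : ℝ) ^ 2)) := by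
          apply mul_le_mul hKR _ (by positivity) (by positivity)
          apply mul_le_mul_of_nonneg_left p1 (by positivity)
      _ = 3 / 4 * (C * α ^ 2 * (Δt : ℝ) ^ 2) := by ring
      _ ≤ C * α ^ 2 * (Δt : ℝ) ^ 2 := by nlinarith [hC.le, sq_nonneg ((Δt : ℝ) * α)]
  have hT : C * α ^ 2 * (Δt : ℝ) ^ 2 / R
      ≤ C * (α ^ 2 * (Δt : ℝ) ^ 2 / (2 * R)) * (2 + α * Δt / (2 * R)) := by
    have hterm : 0 ≤ α * (Δt : ℝ) / (2 * R) := by positivity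
    have h1 : C * (α ^ 2 * (Δt : ℝ) ^ 2 / (2 * R)) * 2
        ≤ C * (α ^ 2 * (Δt : ℝ) ^ 2 / (2 * R)) * (2 + α * Δt / (2 * R)) := by
      apply mul_le_mul_of_nonneg_left (by linarith) (by positivity)
    have h2 : C * (α ^ 2 * (Δt : ℝ) ^ 2 / (2 * R)) * 2 = C * α ^ 2 * (Δt : ℝ) ^ 2 / R := by
      field_simp
    linarith
  calc specNorm (A (t₀ + Δt) - A' (t₀ + Δt))
      ≤ h ^ 3 * bmax * c * α ^ 2 * (5 / 4 * (Δt : ℝ) ^ 2 + 1 / 4 * Δt) := hfinal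
    _ ≤ C * α ^ 2 * (Δt : ℝ) ^ 2 / R := hX
    _ ≤ C * (α ^ 2 * (Δt : ℝ) ^ 2 / (2 * R)) * (2 + α * Δt / (2 * R)) := hT
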